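/- Let K/k be a finite extension of fields of odd degree, char k ≠ 2, and let q be a nondegenerate quadratic form over k. If q is isotropic over K, then q is isotropic over k (Springer's theorem). -/

import Mathlib

open Matrix Polynomial

section helpers
variable {R S : Type*} [CommRing R] [CommRing S] {m : ℕ}

lemma qf_map (φ : R →+* S) (M : Matrix (Fin m) (Fin m) R) (v : Fin m → R) :
    φ (v ⬝ᵥ M.mulVec v) = (φ ∘ v) ⬝ᵥ (M.map φ).mulVec (φ ∘ v) := by
  simp only [dotProduct, mulVec, Matrix.map_apply, Function.comp, map_sum, _root_.map_mul]

lemma qf_sum (M : Matrix (Fin m) (Fin m) R) (v : Fin m → R) :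
    v ⬝ᵥ M.mulVec v = ∑ i, ∑ l, M i l * (v i * v l) := by
  simp only [dotProduct, mulVec, Finset.mul_sum]
  exact Finset.sum_congr rfl fun i _ => Finset.sum_congr rfl fun l _ => by ring

end helpers

/-- every nonzero polynomial of odd degree over a field has a monic irreducible factor of
odd degree. -/
lemma odd_irred_factor {k : Type*} [Field k] :
    ∀ (n : ℕ) (g : k[X]), g.natDegree = n → g ≠ 0 → Odd g.natDegree →
    ∃ h : k[X], h.Monic ∧ Irreducible h ∧ h ∣ g ∧ Odd h.natDegree ∧ h.natDegree ≤ g.natDegree := by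
  intro n
  induction n using Nat.strong_induction_on with
  | _ n IH =>
  intro g hgn hg0 hgodd
  by_cases hirr : Irreducible g
  · have hu : IsUnit (C g.leadingCoeff⁻¹) :=
      isUnit_C.mpr (inv_ne_zero (leadingCoeff_ne_zero.mpr hg0)).isUnit
    refine ⟨g * C g.leadingCoeff⁻¹, monic_mul_leadingCoeff_inv hg0,
      (irreducible_mul_isUnit hu).mpr hirr, ?_, ?_, ?_⟩
    · exact (hu.mul_right_dvd).mpr dvd_rfl
    · rwa [natDegree_mul_leadingCoeff_inv _ hg0]
    · rw [natDegree_mul_leadingCoeff_inv _ hg0]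
  · have hgu : ¬ IsUnit g := by
      intro hu
      have h0 := natDegree_eq_zero_of_isUnit hu
      rw [h0] at hgodd; simp [Nat.odd_iff] at hgodd
    rw [irreducible_iff] at hirr
    push_neg at hirr
    obtain ⟨a, b, hab, ha, hb⟩ := hirr hgu
    have ha0 : a ≠ 0 := fun h => hg0 (by rw [hab, h, zero_mul])
    have hb0 : b ≠ 0 := fun h => hg0 (by rw [hab, h, mul_zero])
    have key : ∀ c : k[X], c ≠ 0 → ¬IsUnit c → 1 ≤ c.natDegree := by
      intro c hc0 hcu
      by_contra h
      have h0 : c.natDegree = 0 := by omega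
      have : IsUnit (c.coeff 0) := isUnit_iff_ne_zero.mpr
        (fun hc => hc0 (by rw [eq_C_of_natDegree_eq_zero h0, hc, map_zero]))
      exact hcu (by rw [eq_C_of_natDegree_eq_zero h0]; exact this.map C)
    have hda : 1 ≤ a.natDegree := key a ha0 ha
    have hdb : 1 ≤ b.natDegree := key b hb0 hb
    have hsum : a.natDegree + b.natDegree = n := by
      rw [← hgn, hab, natDegree_mul ha0 hb0]
    have hor : a.natDegree % 2 = 1 ∨ b.natDegree % 2 = 1 := by
      have := Nat.odd_iff.mp hgodd; omega
    have hor : Odd a.natDegree ∨ Odd b.natDegree := by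
      rcases hor with h | h
      exacts [Or.inl (Nat.odd_iff.mpr h), Or.inr (Nat.odd_iff.mpr h)]
    rcases hor with hoa | hob
    · obtain ⟨h, h1, h2, h3, h4, h5⟩ := IH a.natDegree (by omega) a rfl ha0 hoa
      exact ⟨h, h1, h2, h3.trans ⟨b, hab⟩, h4, by omega⟩
    · obtain ⟨h, h1, h2, h3, h4, h5⟩ := IH b.natDegree (by omega) b rfl hb0 hob
      exact ⟨h, h1, h2, h3.trans ⟨a, by rw [hab, mul_comm]⟩, h4, by omega⟩

/-- Springer descent for a simple extension `k[X]/(p)`, by strong induction on the degree. -/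
theorem springer_adjoinRoot : ∀ (d : ℕ) {k : Type*} [Field k] {m : ℕ}
    (M : Matrix (Fin m) (Fin m) k) (p : k[X]), p.Monic → Irreducible p →
    p.natDegree = d → Odd d →
    (∃ w : Fin m → AdjoinRoot p, w ≠ 0 ∧
      w ⬝ᵥ (M.map (algebraMap k (AdjoinRoot p))).mulVec w = 0) →
    ∃ v : Fin m → k, v ≠ 0 ∧ v ⬝ᵥ M.mulVec v = 0 := by
  intro d
  induction d using Nat.strong_induction_on with
  | _ d IH =>
  intro k _ m M p hmon hirr hpd hodd ⟨w, hw0, hwq⟩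
  classical
  obtain ⟨i0, hi0⟩ : ∃ i, w i ≠ 0 := Function.ne_iff.mp hw0
  have hd1 : 1 ≤ d := hodd.pos
  have hp1 : p ≠ 1 := fun h => by simp [h] at hpd; omega
  -- choose representatives of degree < d
  choose f0 hf0 using fun i => AdjoinRoot.mk_surjective (g := p) (w i)
  set f : Fin m → k[X] := fun i => f0 i %ₘ p with hf
  have hfw : ∀ i, AdjoinRoot.mk p (f i) = w i := by
    intro i
    rw [hf, ← hf0 i]
    show AdjoinRoot.mk p (f0 i %ₘ p) = _
    rw [modByMonic_eq_sub_mul_div _ p, map_sub, _root_.map_mul, AdjoinRoot.mk_self,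
      zero_mul, sub_zero]
  have hfd : ∀ i, (f i).natDegree < d := by
    intro i
    rw [← hpd]
    exact natDegree_modByMonic_lt (f0 i) hmon hp1
  have hfi0 : f i0 ≠ 0 := fun h => hi0 (by rw [← hfw i0, h, map_zero])
  -- extract gcd
  obtain ⟨f', hgcd_eq, hgcd1⟩ := Finset.extract_gcd f ⟨i0, Finset.mem_univ i0⟩
  set d0 : k[X] := Finset.univ.gcd f with hd0def
  have hgcd_eq : ∀ i, f i = d0 * f' i := fun i => hgcd_eq i (Finset.mem_univ i)
  have hd00 : d0 ≠ 0 := fun h => hfi0 (by rw [hgcd_eq i0, h, zero_mul])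
  have hf'i0 : f' i0 ≠ 0 := fun h => hfi0 (by rw [hgcd_eq i0, h, mul_zero])
  have hf'd : ∀ i, (f' i).natDegree < d := by
    intro i
    by_cases h : f' i = 0
    · rw [h]; simpa using hodd.pos
    · have := hfd i
      rw [hgcd_eq i, natDegree_mul hd00 h] at this
      omega
  -- the top coefficient vector
  have hne : (Finset.univ : Finset (Fin m)).Nonempty := ⟨i0, Finset.mem_univ i0⟩
  set e : ℕ := Finset.univ.sup' hne (fun i => (f' i).natDegree) with hedef
  have hub : ∀ i, (f' i).natDegree ≤ e := by
    intro i
    rw [hedef]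
    exact Finset.le_sup' (fun i => (f' i).natDegree) (Finset.mem_univ i)
  obtain ⟨j, hjne, hjdeg⟩ : ∃ j, f' j ≠ 0 ∧ (f' j).natDegree = e := by
    obtain ⟨j0, -, hj0⟩ := Finset.exists_mem_eq_sup' hne (fun i => (f' i).natDegree)
    by_cases h : f' j0 = 0
    · have he0 : e = 0 := by rw [hedef, hj0, h, natDegree_zero]
      exact ⟨i0, hf'i0, le_antisymm (hub i0) (by rw [he0]; exact Nat.zero_le _)⟩
    · exact ⟨j0, h, hj0.symm⟩
  have hed : e < d := hjdeg ▸ hf'd j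
  set c : Fin m → k := fun i => (f' i).coeff e with hcdef
  have hcj : c j ≠ 0 := by
    rw [hcdef]; simpa [← hjdeg] using leadingCoeff_ne_zero.mpr hjne
  -- the quadratic value polynomial
  set Q : k[X] := f' ⬝ᵥ (M.map C).mulVec f' with hQdef
  have hQsum : Q = ∑ i, ∑ l, C (M i l) * (f' i * f' l) := by
    rw [hQdef, qf_sum]; rfl
  have hQdegle : Q.natDegree ≤ e + e := by
    rw [hQsum]
    refine natDegree_sum_le_of_forall_le _ _ fun i _ => ?_
    refine natDegree_sum_le_of_forall_le _ _ fun l _ => ?_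
    calc (C (M i l) * (f' i * f' l)).natDegree
        ≤ (C (M i l)).natDegree + (f' i * f' l).natDegree := natDegree_mul_le
      _ ≤ 0 + ((f' i).natDegree + (f' l).natDegree) := by
          exact add_le_add (by simp) natDegree_mul_le
      _ ≤ e + e := by have := hub i; have := hub l; omega
  have hQcoeff : Q.coeff (e + e) = c ⬝ᵥ M.mulVec c := by
    rw [hQsum, qf_sum]
    rw [finset_sum_coeff]
    refine Finset.sum_congr rfl fun i _ => ?_
    rw [finset_sum_coeff]
    refine Finset.sum_congr rfl fun l _ => ?_
    rw [coeff_C_mul, coeff_mul_add_eq_of_natDegree_le (hub i) (hub l)]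
  -- divisibility by p
  have hmkQ : AdjoinRoot.mk p (f ⬝ᵥ (M.map C).mulVec f) = 0 := by
    rw [qf_map (AdjoinRoot.mk p)]
    have : (M.map C).map (AdjoinRoot.mk p) = M.map (algebraMap k (AdjoinRoot p)) := by
      rw [Matrix.map_map]; rfl
    rw [this]
    have : (AdjoinRoot.mk p) ∘ f = w := funext hfw
    rw [this, hwq]
  have hfQ : f ⬝ᵥ (M.map C).mulVec f = d0 ^ 2 * Q := by
    rw [qf_sum, hQsum, Finset.mul_sum]
    refine Finset.sum_congr rfl fun i _ => ?_
    rw [Finset.mul_sum]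
    refine Finset.sum_congr rfl fun l _ => ?_
    simp only [Matrix.map_apply]
    rw [hgcd_eq i, hgcd_eq l]; ring
  have hprime : Prime p := hirr.prime
  have hpd0 : ¬ p ∣ d0 := by
    intro hdvd
    exact hi0 (by rw [← hfw i0]
                  exact AdjoinRoot.mk_eq_zero.mpr ((hdvd.trans ⟨f' i0, hgcd_eq i0⟩)))
  have hpQ : p ∣ Q := by
    have h1 : p ∣ d0 ^ 2 * Q := by
      rw [← hfQ]; exact AdjoinRoot.mk_eq_zero.mp hmkQ
    rcases hprime.dvd_mul.mp h1 with h | h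
    · exact absurd (hprime.dvd_of_dvd_pow h) hpd0
    · exact h
  -- case split on whether the top coefficient vector is isotropic over k
  by_cases hcq : c ⬝ᵥ M.mulVec c = 0
  · exact ⟨c, fun h => hcj (congrFun h j), hcq⟩
  · have hQc0 : Q.coeff (e + e) ≠ 0 := by rw [hQcoeff]; exact hcq
    have hQ0 : Q ≠ 0 := fun h => hQc0 (by rw [h, coeff_zero])
    have hQdeg : Q.natDegree = e + e := le_antisymm hQdegle (le_natDegree_of_ne_zero hQc0)
    obtain ⟨g, hg⟩ := hpQ
    have hg0 : g ≠ 0 := fun h => hQ0 (by rw [hg, h, mul_zero])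
    have hsum : d + g.natDegree = e + e := by
      rw [← hpd, ← natDegree_mul hmon.ne_zero hg0, ← hg, hQdeg]
    have hgodd : Odd g.natDegree := by
      rw [Nat.odd_iff] at hodd ⊢; omega
    obtain ⟨h, hhmon, hhirr, hhdvd, hhodd, hhle⟩ := odd_irred_factor g.natDegree g rfl hg0 hgodd
    have hhd : h.natDegree < d := by omega
    refine IH h.natDegree hhd M h hhmon hhirr rfl hhodd ⟨AdjoinRoot.mk h ∘ f', ?_, ?_⟩
    · intro hz
      have : ∀ i, h ∣ f' i := fun i =>
        AdjoinRoot.mk_eq_zero.mp (congrFun hz i)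
      have : h ∣ Finset.univ.gcd f' := Finset.dvd_gcd fun i _ => this i
      rw [hgcd1] at this
      exact hhirr.not_isUnit (isUnit_of_dvd_one this)
    · have := qf_map (AdjoinRoot.mk h) (M.map C) f'
      rw [← hQdef] at this
      have hmm : (M.map C).map (AdjoinRoot.mk h) = M.map (algebraMap k (AdjoinRoot h)) := by
        rw [Matrix.map_map]; rfl
      rw [hmm] at this
      rw [← this, hg, _root_.map_mul, AdjoinRoot.mk_eq_zero.mpr hhdvd, mul_zero]

/-- the trivial case: all coordinates lie in the base field. -/
lemma springer_bot {k K : Type*} [Field k] [Field K] [Algebra k K] {m : ℕ}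
    (M : Matrix (Fin m) (Fin m) k) (w : Fin m → K) (hw0 : w ≠ 0)
    (hwq : w ⬝ᵥ (M.map (algebraMap k K)).mulVec w = 0)
    (hall : ∀ i, w i ∈ (⊥ : Subalgebra k K)) :
    ∃ v : Fin m → k, v ≠ 0 ∧ v ⬝ᵥ M.mulVec v = 0 := by
  have hall' : ∀ i, ∃ x : k, algebraMap k K x = w i := by
    intro i
    have := hall i
    rwa [Algebra.mem_bot, Set.mem_range] at this
  choose v hv using hall'
  have hinj : Function.Injective (algebraMap k K) := (algebraMap k K).injective
  refine ⟨v, ?_, ?_⟩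
  · intro h
    apply hw0
    funext i
    rw [Pi.zero_apply, ← hv i, show v i = 0 from congrFun h i, map_zero]
  · apply hinj
    rw [qf_map (algebraMap k K), map_zero]
    have : (algebraMap k K) ∘ v = w := funext hv
    rw [this, hwq]

/-- descent from a simple extension `k⟮α⟯` using `springer_adjoinRoot`. -/
lemma springer_simple {k K : Type*} [Field k] [Field K] [Algebra k K]
    [FiniteDimensional k K] (α : K) {m : ℕ} (M : Matrix (Fin m) (Fin m) k)
    (hodd : Odd (Module.finrank k (IntermediateField.adjoin k {α})))
    (hiso : ∃ u : Fin m → (IntermediateField.adjoin k {α} : IntermediateField k K),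
      u ≠ 0 ∧ u ⬝ᵥ ((M.map (algebraMap k _)).mulVec u) = 0) :
    ∃ v : Fin m → k, v ≠ 0 ∧ v ⬝ᵥ M.mulVec v = 0 := by
  obtain ⟨u, hu0, huq⟩ := hiso
  have hint : IsIntegral k α := IsIntegral.of_finite k α
  set p : Polynomial k := minpoly k α with hpdef
  have hmon : p.Monic := minpoly.monic hint
  have hirr : Irreducible p := minpoly.irreducible hint
  have hdeg : Module.finrank k (IntermediateField.adjoin k {α}) = p.natDegree :=
    IntermediateField.adjoin.finrank hint
  set e := IntermediateField.adjoinRootEquivAdjoin k hint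
  set ψ : (IntermediateField.adjoin k {α} : IntermediateField k K) →+* AdjoinRoot p :=
    (e.symm : _ ≃ₐ[k] AdjoinRoot p).toRingEquiv.toRingHom
  refine springer_adjoinRoot p.natDegree M p hmon hirr rfl (hdeg ▸ hodd) ⟨ψ ∘ u, ?_, ?_⟩
  · intro h
    apply hu0
    funext i
    have h1 : e.symm (u i) = 0 := congrFun h i
    have h2 : u i = 0 := e.symm.injective (h1.trans (map_zero e.symm).symm)
    rw [Pi.zero_apply, h2]
  · have := qf_map ψ (M.map (algebraMap k _)) u
    rw [huq, map_zero] at this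
    have hmm : (M.map (algebraMap k _)).map ψ = M.map (algebraMap k (AdjoinRoot p)) := by
      rw [Matrix.map_map]
      ext i' j'
      simp only [Matrix.map_apply, Function.comp_apply]
      exact e.symm.commutes (M i' j')
    rw [hmm] at this
    exact this.symm

/-- Springer's theorem, both fields in a common universe. -/
theorem springer_aux : ∀ (n : ℕ) {k K : Type u} [Field k] [Field K] [Algebra k K]
    [FiniteDimensional k K], Module.finrank k K = n → Odd n →
    ∀ {m : ℕ} (M : Matrix (Fin m) (Fin m) k),
    (∃ w : Fin m → K, w ≠ 0 ∧ w ⬝ᵥ (M.map (algebraMap k K)).mulVec w = 0) →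
    ∃ v : Fin m → k, v ≠ 0 ∧ v ⬝ᵥ M.mulVec v = 0 := by
  intro n
  induction n using Nat.strong_induction_on with
  | _ n IH =>
  intro k K _ _ _ _ hn hodd m M ⟨w, hw0, hwq⟩
  by_cases hall : ∀ i, w i ∈ (⊥ : Subalgebra k K)
  · exact springer_bot M w hw0 hwq hall
  · push_neg at hall
    obtain ⟨i0, hi0⟩ := hall
    set α := w i0
    set L : IntermediateField k K := IntermediateField.adjoin k {α} with hLdef
    have hd1 : 1 < Module.finrank k L := by
      rcases Nat.lt_or_ge 1 (Module.finrank k L) with h | h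
      · exact h
      · exfalso
        have hpos : 0 < Module.finrank k L := Module.finrank_pos
        have : Module.finrank k L = 1 := by omega
        rw [IntermediateField.finrank_eq_one_iff] at this
        apply hi0
        have hmem : α ∈ L := IntermediateField.mem_adjoin_simple_self k α
        rw [this, IntermediateField.mem_bot] at hmem
        rwa [Algebra.mem_bot]
    have htower : Module.finrank k L * Module.finrank L K = n := by
      rw [← hn]; exact Module.finrank_mul_finrank k L K
    have hoddL : Odd (Module.finrank k L) ∧ Odd (Module.finrank L K) :=
      Nat.odd_mul.mp (htower ▸ hodd)
    have hpos : 0 < Module.finrank L K := Module.finrank_pos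
    have hlt : Module.finrank L K < n := by
      rw [← htower]
      exact lt_mul_of_one_lt_left hpos hd1
    have hisoK : ∃ w' : Fin m → K, w' ≠ 0 ∧
        w' ⬝ᵥ (((M.map (algebraMap k L)).map (algebraMap L K)).mulVec w') = 0 := by
      refine ⟨w, hw0, ?_⟩
      have : (M.map (algebraMap k L)).map (algebraMap L K) = M.map (algebraMap k K) := by
        rw [Matrix.map_map]
        congr 1
      rw [this]
      exact hwq
    obtain ⟨u, hu0, huq⟩ := IH (Module.finrank L K) hlt (k := ↥L) (K := K) rfl hoddL.2
      (M.map (algebraMap k L)) hisoK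
    exact springer_simple α M hoddL.1 ⟨u, hu0, huq⟩

/-- Springer's theorem: let `K/k` be a finite field extension of odd degree, `char k ≠ 2`,
and let `q` be a nondegenerate quadratic form over `k` (Gram matrix `M`).  If `q` is
isotropic over `K`, then `q` is isotropic over `k`. -/
theorem stmt17 {k K : Type*} [Field k] [Field K] [Algebra k K]
    [FiniteDimensional k K] (hodd : Odd (Module.finrank k K))
    (h2 : (2 : k) ≠ 0) {m : ℕ}
    (M : Matrix (Fin m) (Fin m) k) (hs : M.IsSymm) (hnd : M.det ≠ 0)
    (hiso : ∃ w : Fin m → K, w ≠ 0 ∧ w ⬝ᵥ (M.map (algebraMap k K)).mulVec w = 0) :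
    ∃ v : Fin m → k, v ≠ 0 ∧ v ⬝ᵥ M.mulVec v = 0 := by
  obtain ⟨w, hw0, hwq⟩ := hiso
  by_cases hall : ∀ i, w i ∈ (⊥ : Subalgebra k K)
  · exact springer_bot M w hw0 hwq hall
  · push_neg at hall
    obtain ⟨i0, hi0⟩ := hall
    set α := w i0
    set L : IntermediateField k K := IntermediateField.adjoin k {α} with hLdef
    have hd1 : 0 < Module.finrank k L := Module.finrank_pos
    have htower : Module.finrank k L * Module.finrank L K = Module.finrank k K :=
      Module.finrank_mul_finrank k L K
    have hoddL : Odd (Module.finrank k L) ∧ Odd (Module.finrank L K) :=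
      Nat.odd_mul.mp (htower ▸ hodd)
    have hisoK : ∃ w' : Fin m → K, w' ≠ 0 ∧
        w' ⬝ᵥ (((M.map (algebraMap k L)).map (algebraMap L K)).mulVec w') = 0 := by
      refine ⟨w, hw0, ?_⟩
      have : (M.map (algebraMap k L)).map (algebraMap L K) = M.map (algebraMap k K) := by
        rw [Matrix.map_map]
        congr 1
      rw [this]
      exact hwq
    obtain ⟨u, hu0, huq⟩ := springer_aux (Module.finrank L K) (k := ↥L) (K := K) rfl hoddL.2
      (M.map (algebraMap k L)) hisoK
    exact springer_simple α M hoddL.1 ⟨u, hu0, huq⟩
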